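/- arXiv:2012.10943 — 2 statements merged into one kernel-verified Lean document; each statement's English description precedes it below -/
import Mathlib

section
/- Let $\mathcal{H}$ be a reproducing kernel Hilbert space of real functions on a set $\mathcal{X}$, so for every $x$ there is $C_x < \infty$ with $|v(x)| \leq C_x \|v\|_{\mathcal{H}}$ for all $v$. Fix points $z_1, \dots, z_M \in \mathcal{X}$, constants $M \geq 2$, $\sigma > 0$, and let $\ell(v) = \log p(v(z_1), \dots, v(z_M))$ where $p$ is the noisy-argmax probability $p(w) = \mathbb{P}(W_1 > W_j\, \forall j \neq 1)$ with $W_j \sim \mathcal{N}(w_j, \sigma^2)$ independent. Then there exists $K > 0$ such that $0 \leq -\ell(v) \leq K(1 + \|v\|_{\mathcal{H}}^2)$ for all $v \in \mathcal{H}$. -/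
open MeasureTheory ProbabilityTheory

/-- The noisy-argmax probability `p(w) = P(W_1 > W_j ∀ j ≠ 1)` with independent
`W_j ~ N(w_j, σ²)`. -/
noncomputable def argmaxProb (M : ℕ) [NeZero M] (σ : ℝ) (w : Fin M → ℝ) : ℝ :=
  ((Measure.pi fun j : Fin M => gaussianReal (w j) (Real.toNNReal (σ ^ 2)))
    {u | ∀ j : Fin M, j ≠ 0 → u j < u 0}).toReal

lemma gauss_Ioc_lb (σ : ℝ) (hσ : 0 < σ) (w l D : ℝ)
    (hD : ∀ x ∈ Set.Ioc l (l+1), (x - w)^2 ≤ D) :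
    ENNReal.ofReal ((Real.sqrt (2*Real.pi*σ^2))⁻¹ * Real.exp (-D/(2*σ^2)))
      ≤ gaussianReal w (Real.toNNReal (σ^2)) (Set.Ioc l (l+1)) := by
  have hv : (Real.toNNReal (σ^2)) ≠ 0 := by
    simp [Real.toNNReal_eq_zero, not_le, pow_pos hσ, hσ.ne']
  have hcoe : ((Real.toNNReal (σ^2)) : ℝ) = σ^2 := Real.coe_toNNReal _ (sq_nonneg σ)
  rw [gaussianReal_apply _ hv]
  set a : ENNReal := ENNReal.ofReal ((Real.sqrt (2*Real.pi*σ^2))⁻¹ * Real.exp (-D/(2*σ^2))) with ha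
  calc a = a * volume (Set.Ioc l (l+1)) := by
            rw [Real.volume_Ioc]; norm_num
    _ = ∫⁻ _ in Set.Ioc l (l+1), a := by rw [setLIntegral_const]
    _ ≤ ∫⁻ x in Set.Ioc l (l+1), gaussianPDF w (Real.toNNReal (σ^2)) x := by
        refine setLIntegral_mono (measurable_gaussianPDF _ _) (fun x hx => ?_)
        rw [ha, gaussianPDF, gaussianPDFReal, hcoe]
        apply ENNReal.ofReal_le_ofReal
        apply mul_le_mul_of_nonneg_left _ (by positivity)
        apply Real.exp_le_exp.mpr
        have := hD x hx
        have h2 : 0 < 2*σ^2 := by positivity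
        rw [div_le_div_iff_of_pos_right h2]
        linarith

lemma arith_key (m E c d t L : ℝ) (hm : 2 ≤ m) (hE : 0 ≤ E) (hc : 0 ≤ c) (hd : 0 ≤ d)
    (ht : 0 ≤ t) (hL : -L ≤ E + d + c*t) : -(m*L) ≤ (m*(E+d+c)+1)*(1+t) := by
  nlinarith [mul_nonneg (mul_nonneg (by linarith : (0:ℝ) ≤ m) hE) ht,
    mul_nonneg (mul_nonneg (by linarith : (0:ℝ) ≤ m) hd) ht,
    mul_nonneg (mul_nonneg (by linarith : (0:ℝ) ≤ m) hc) ht,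
    mul_le_mul_of_nonneg_left hL (by linarith : (0:ℝ) ≤ m)]

set_option maxHeartbeats 1000000 in
/-- Theorem 2 (first part): for an RKHS `H` of real functions on `X` (realised via a
linear evaluation map `ev` with pointwise bounds `|ev v x| ≤ C x ‖v‖`), the negative
log noisy-argmax likelihood `-ℓ(v) = -log p(v(z_1),…,v(z_M))` is nonnegative and
bounded by `K(1 + ‖v‖²)` for some `K > 0`. -/
theorem stmt_11 {X : Type*} {H : Type*} [NormedAddCommGroup H] [InnerProductSpace ℝ H]
    [CompleteSpace H]
    (ev : H →ₗ[ℝ] (X → ℝ)) (C : X → ℝ)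
    (hC : ∀ (v : H) (x : X), |ev v x| ≤ C x * ‖v‖)
    (M : ℕ) [NeZero M] (hM : 2 ≤ M) (σ : ℝ) (hσ : 0 < σ) (z : Fin M → X) :
    ∃ K > (0 : ℝ), ∀ v : H,
      0 ≤ -(Real.log (argmaxProb M σ fun j => ev v (z j))) ∧
      -(Real.log (argmaxProb M σ fun j => ev v (z j))) ≤ K * (1 + ‖v‖ ^ 2) := by
  set Cm : ℝ := (∑ j : Fin M, |C (z j)|) + 1 with hCm
  have hCm1 : 1 ≤ Cm := by
    have : 0 ≤ ∑ j : Fin M, |C (z j)| := Finset.sum_nonneg fun j _ => abs_nonneg _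
    linarith
  have hCmj : ∀ j : Fin M, C (z j) ≤ Cm := by
    intro j
    have h1 : C (z j) ≤ |C (z j)| := le_abs_self _
    have h2 : |C (z j)| ≤ ∑ i : Fin M, |C (z i)| :=
      Finset.single_le_sum (f := fun i => |C (z i)|) (fun i _ => abs_nonneg _) (Finset.mem_univ j)
    linarith
  set E : ℝ := |Real.log (Real.sqrt (2*Real.pi*σ^2))| with hE
  refine ⟨(M : ℝ) * (E + 1/σ^2 + 4*Cm^2/σ^2) + 1, by positivity, fun v => ?_⟩
  set w : Fin M → ℝ := fun j => ev v (z j) with hw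
  set B : ℝ := Cm * ‖v‖ with hB
  have hB0 : 0 ≤ B := by positivity
  have hwB : ∀ j, |w j| ≤ B := fun j =>
    (hC v (z j)).trans (mul_le_mul_of_nonneg_right (hCmj j) (norm_nonneg v))
  set D : ℝ := (2*B+1)^2 with hD
  set a : ℝ := (Real.sqrt (2*Real.pi*σ^2))⁻¹ * Real.exp (-D/(2*σ^2)) with haa
  have ha0 : 0 < a := by positivity
  set μs : Fin M → Measure ℝ := fun j => gaussianReal (w j) (Real.toNNReal (σ ^ 2)) with hμs
  set S : Fin M → Set ℝ := fun j => if j = 0 then Set.Ioc B (B+1) else Set.Ioc (B-1) (B-1+1)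
    with hS
  -- lower bound on each factor
  have hfac : ∀ j : Fin M, ENNReal.ofReal a ≤ μs j (S j) := by
    intro j
    by_cases hj : j = 0 <;> simp only [hS, hj, if_true, if_false, hμs, reduceIte]
    · refine gauss_Ioc_lb σ hσ _ _ _ (fun x hx => ?_)
      have h1 := hwB 0
      have h2 := abs_le.mp h1
      rw [hD]
      have hx1 := hx.1
      have hx2 := hx.2
      nlinarith [sq_nonneg (x - w 0 - (2*B+1)), sq_nonneg (x - w 0 + (2*B+1))]
    · refine gauss_Ioc_lb σ hσ _ _ _ (fun x hx => ?_)
      have h2 := abs_le.mp (hwB j)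
      rw [hD]
      have hx1 := hx.1
      have hx2 := hx.2
      nlinarith [sq_nonneg (x - w j - (2*B+1)), sq_nonneg (x - w j + (2*B+1))]
  have hsub : Set.pi Set.univ S ⊆ {u : Fin M → ℝ | ∀ j : Fin M, j ≠ 0 → u j < u 0} := by
    intro u hu j hj
    have h0 := hu 0 (Set.mem_univ 0)
    have hjj := hu j (Set.mem_univ j)
    simp only [hS, if_true, reduceIte] at h0
    simp only [hS, hj, if_false, reduceIte] at hjj
    have : u j ≤ B := by simpa using hjj.2
    exact lt_of_le_of_lt this h0.1
  have hlow : ENNReal.ofReal (a ^ M) ≤ Measure.pi μs {u | ∀ j : Fin M, j ≠ 0 → u j < u 0} := by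
    calc ENNReal.ofReal (a ^ M) = (ENNReal.ofReal a) ^ M := by
          rw [ENNReal.ofReal_pow ha0.le]
      _ = ∏ _j : Fin M, ENNReal.ofReal a := by simp
      _ ≤ ∏ j : Fin M, μs j (S j) := Finset.prod_le_prod' fun j _ => hfac j
      _ = Measure.pi μs (Set.pi Set.univ S) := (Measure.pi_pi μs S).symm
      _ ≤ _ := measure_mono hsub
  have hfin : Measure.pi μs {u | ∀ j : Fin M, j ≠ 0 → u j < u 0} ≠ ⊤ := measure_ne_top _ _
  have hple : argmaxProb M σ w ≤ 1 := by
    rw [argmaxProb]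
    exact ENNReal.toReal_le_of_le_ofReal zero_le_one (by simpa using prob_le_one)
  have hplow : a ^ M ≤ argmaxProb M σ w := by
    rw [argmaxProb]
    have := ENNReal.toReal_mono hfin hlow
    rwa [ENNReal.toReal_ofReal (by positivity)] at this
  have hp0 : 0 < argmaxProb M σ w := lt_of_lt_of_le (by positivity) hplow
  constructor
  · have := Real.log_nonpos hp0.le hple
    linarith
  · -- -log p ≤ -M * log a ≤ K (1 + ‖v‖²)
    have h1 : Real.log (a ^ M) ≤ Real.log (argmaxProb M σ w) :=
      Real.log_le_log (by positivity) hplow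
    rw [Real.log_pow] at h1
    have hla : Real.log a = -Real.log (Real.sqrt (2*Real.pi*σ^2)) - D/(2*σ^2) := by
      rw [haa, Real.log_mul (by positivity) (Real.exp_ne_zero _), Real.log_inv, Real.log_exp]
      ring
    have hDle : D ≤ 8*B^2 + 2 := by rw [hD]; nlinarith [sq_nonneg (2*B-1)]
    have hσ2 : 0 < σ^2 := by positivity
    have hkey : -((M : ℝ) * Real.log a) ≤
        ((M : ℝ) * (E + 1/σ^2 + 4*Cm^2/σ^2) + 1) * (1 + ‖v‖ ^ 2) := by
      have hM0 : (2 : ℝ) ≤ (M : ℝ) := by exact_mod_cast hM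
      have hEabs : -Real.log (Real.sqrt (2*Real.pi*σ^2)) ≤ E := by
        rw [hE]; exact neg_le_abs _
      have hDdiv : D/(2*σ^2) ≤ 1/σ^2 + 4*Cm^2/σ^2 * ‖v‖^2 := by
        rw [div_le_iff₀ (by positivity)]
        have hBsq : B^2 = Cm^2 * ‖v‖^2 := by rw [hB]; ring
        have : (1/σ^2 + 4*Cm^2/σ^2 * ‖v‖^2) * (2*σ^2) = 2 + 8*Cm^2*‖v‖^2 := by
          field_simp; ring
        rw [this]
        nlinarith
      have hnla : -Real.log a ≤ E + 1/σ^2 + 4*Cm^2/σ^2 * ‖v‖^2 := by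
        have hEge : Real.log (Real.sqrt (2*Real.pi*σ^2)) ≤ E := le_abs_self _
        rw [hla]
        linarith
      exact arith_key (M : ℝ) E (4*Cm^2/σ^2) (1/σ^2) (‖v‖^2) (Real.log a) hM0
        (abs_nonneg _) (by positivity) (by positivity) (sq_nonneg _) hnla
    linarith
end

section
/- With the network of the previous statement, for every $r > 0$, every $n$, and every $x$, there exists a constant $\bar{K}(r, x, n)$ such that for all parameter sequences $\theta, \tilde{\theta} \in \ell^2$ with $\max(\|\theta\|_{\ell^2}, \|\tilde{\theta}\|_{\ell^2}) \leq r$, the corresponding network outputs $u_\theta, u_{\tilde\theta}$ satisfy $(u_\theta(x) - u_{\tilde\theta}(x))^2 \leq 2\,\bar{K}(r, x, n)\, \|\theta - \tilde{\theta}\|_{\ell^2}^2$. -/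
open Finset

/-- The layer functions of a fully connected feed-forward network: layer index `0`
corresponds to the first layer `f^{(1)}`, and layer `l+1` has inputs from the `N l`
nodes of layer `l`. -/
noncomputable def netF (d : ℕ) (N : ℕ → ℕ) (w : ℕ → ℕ → ℕ → ℝ) (b : ℕ → ℕ → ℝ)
    (ζ : ℝ → ℝ) (x : Fin d → ℝ) : ℕ → ℕ → ℝ
  | 0, i => b 0 i + ∑ j : Fin d, w 0 i j.val * x j
  | l + 1, i => b (l + 1) i +
      ∑ j ∈ Finset.range (N l), w (l + 1) i j * ζ (netF d N w b ζ x l j)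

/-- Recursive bound on the squared norms of the layer outputs. -/
noncomputable def netBnd (r X : ℝ) : ℕ → ℝ
  | 0 => 2 * r ^ 2 * (1 + X)
  | l + 1 => 2 * r ^ 2 * (1 + netBnd r X l)

/-- Recursive Lipschitz constant for the layers. -/
noncomputable def netLip (r X : ℝ) : ℕ → ℝ
  | 0 => 2 * (1 + X)
  | l + 1 => 3 * (1 + netBnd r X l + r ^ 2 * netLip r X l)

lemma netBnd_nonneg (r X : ℝ) (hX : 0 ≤ X) : ∀ l, 0 ≤ netBnd r X l
  | 0 => by unfold netBnd; positivity
  | l + 1 => by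
      have := netBnd_nonneg r X hX l
      unfold netBnd; positivity

lemma netLip_nonneg (r X : ℝ) (hX : 0 ≤ X) : ∀ l, 0 ≤ netLip r X l
  | 0 => by unfold netLip; positivity
  | l + 1 => by
      have h1 := netBnd_nonneg r X hX l
      have h2 := netLip_nonneg r X hX l
      unfold netLip; positivity

lemma sq_add_le_two (a b : ℝ) : (a + b) ^ 2 ≤ 2 * a ^ 2 + 2 * b ^ 2 := by
  nlinarith [sq_nonneg (a - b)]

lemma sq_add_le_three (a b c : ℝ) : (a + b + c) ^ 2 ≤ 3 * (a ^ 2 + b ^ 2 + c ^ 2) := by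
  nlinarith [sq_nonneg (a - b), sq_nonneg (b - c), sq_nonneg (a - c)]

/-- Local Lipschitz continuity of the network output in its parameters (Lemma 1): for
every `r > 0`, `x` and depth `n` there is a constant `K̄(r,x,n)` such that whenever two
parameter sequences have `ℓ²` norm at most `r` and their difference has `ℓ²` norm at
most `Δ`, the outputs satisfy `(u_θ(x) - u_θ̃(x))² ≤ 2 K̄ Δ²`. -/
theorem stmt_14 (d n : ℕ) (hd : 1 ≤ d) (hn : 1 ≤ n)
    (ζ : ℝ → ℝ) (hζ : LipschitzWith 1 ζ) (hζ0 : ζ 0 = 0)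
    (x : Fin d → ℝ) (r : ℝ) (hr : 0 < r) :
    ∃ K : ℝ, ∀ (N : ℕ → ℕ) (w w' : ℕ → ℕ → ℕ → ℝ) (b b' : ℕ → ℕ → ℝ) (Δ : ℝ),
      N n = 1 → 0 ≤ Δ →
      (∑ l ∈ Finset.range (n + 1),
        ((∑ i ∈ Finset.range (N l), (b l i) ^ 2) +
          ∑ i ∈ Finset.range (N l),
            ∑ j ∈ Finset.range (if l = 0 then d else N (l - 1)), (w l i j) ^ 2)) ≤ r ^ 2 →
      (∑ l ∈ Finset.range (n + 1),
        ((∑ i ∈ Finset.range (N l), (b' l i) ^ 2) +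
          ∑ i ∈ Finset.range (N l),
            ∑ j ∈ Finset.range (if l = 0 then d else N (l - 1)), (w' l i j) ^ 2)) ≤ r ^ 2 →
      (∑ l ∈ Finset.range (n + 1),
        ((∑ i ∈ Finset.range (N l), (b l i - b' l i) ^ 2) +
          ∑ i ∈ Finset.range (N l),
            ∑ j ∈ Finset.range (if l = 0 then d else N (l - 1)),
              (w l i j - w' l i j) ^ 2)) ≤ Δ ^ 2 →
      (netF d N w b ζ x n 0 - netF d N w' b' ζ x n 0) ^ 2 ≤ 2 * K * Δ ^ 2 := by
  classical
  set X : ℝ := ∑ j : Fin d, (x j) ^ 2 with hXdef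
  have hX : 0 ≤ X := Finset.sum_nonneg fun _ _ => sq_nonneg _
  -- Lipschitz properties of ζ
  have hζsq : ∀ a b : ℝ, (ζ a - ζ b) ^ 2 ≤ (a - b) ^ 2 := by
    intro a b
    have h := hζ.dist_le_mul a b
    rw [Real.dist_eq, Real.dist_eq, NNReal.coe_one, one_mul] at h
    calc (ζ a - ζ b) ^ 2 = |ζ a - ζ b| ^ 2 := (sq_abs _).symm
      _ ≤ |a - b| ^ 2 := by
          apply pow_le_pow_left₀ (abs_nonneg _) h
      _ = (a - b) ^ 2 := sq_abs _
  have hζsq0 : ∀ a : ℝ, (ζ a) ^ 2 ≤ a ^ 2 := by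
    intro a
    have := hζsq a 0
    simpa [hζ0] using this
  refine ⟨netLip r X n, ?_⟩
  intro N w w' b b' Δ hNn hΔ hθ hθ' hdiff
  have hrsq : (0:ℝ) ≤ r ^ 2 := sq_nonneg r
  -- extract per-layer bounds
  have extract : ∀ (c : ℕ → ℕ → ℝ) (v : ℕ → ℕ → ℕ → ℝ) (R : ℝ),
      (∑ l ∈ Finset.range (n + 1),
        ((∑ i ∈ Finset.range (N l), (c l i) ^ 2) +
          ∑ i ∈ Finset.range (N l),
            ∑ j ∈ Finset.range (if l = 0 then d else N (l - 1)), (v l i j) ^ 2)) ≤ R →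
      ∀ l, l ≤ n →
        (∑ i ∈ Finset.range (N l), (c l i) ^ 2) ≤ R ∧
        (∑ i ∈ Finset.range (N l),
            ∑ j ∈ Finset.range (if l = 0 then d else N (l - 1)), (v l i j) ^ 2) ≤ R := by
    intro c v R hR l hl
    have hmem : l ∈ Finset.range (n + 1) := Finset.mem_range.2 (Nat.lt_succ_of_le hl)
    have hnn : ∀ k ∈ Finset.range (n + 1),
        0 ≤ (∑ i ∈ Finset.range (N k), (c k i) ^ 2) +
          ∑ i ∈ Finset.range (N k),
            ∑ j ∈ Finset.range (if k = 0 then d else N (k - 1)), (v k i j) ^ 2 := by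
      intro k _
      have h1 : 0 ≤ ∑ i ∈ Finset.range (N k), (c k i) ^ 2 :=
        Finset.sum_nonneg fun _ _ => sq_nonneg _
      have h2 : 0 ≤ ∑ i ∈ Finset.range (N k),
          ∑ j ∈ Finset.range (if k = 0 then d else N (k - 1)), (v k i j) ^ 2 :=
        Finset.sum_nonneg fun _ _ => Finset.sum_nonneg fun _ _ => sq_nonneg _
      linarith
    have hsingle := Finset.single_le_sum hnn hmem
    have h1 : 0 ≤ ∑ i ∈ Finset.range (N l), (c l i) ^ 2 :=
      Finset.sum_nonneg fun _ _ => sq_nonneg _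
    have h2 : 0 ≤ ∑ i ∈ Finset.range (N l),
        ∑ j ∈ Finset.range (if l = 0 then d else N (l - 1)), (v l i j) ^ 2 :=
      Finset.sum_nonneg fun _ _ => Finset.sum_nonneg fun _ _ => sq_nonneg _
    constructor <;> linarith
  have hb := extract b w _ hθ
  have hb' := extract b' w' _ hθ'
  have hbd := extract (fun l i => b l i - b' l i) (fun l i j => w l i j - w' l i j) _ hdiff
  -- main induction
  have main : ∀ l, l ≤ n →
      ((∑ i ∈ Finset.range (N l), (netF d N w b ζ x l i) ^ 2) ≤ netBnd r X l) ∧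
      ((∑ i ∈ Finset.range (N l), (netF d N w' b' ζ x l i) ^ 2) ≤ netBnd r X l) ∧
      ((∑ i ∈ Finset.range (N l),
          (netF d N w b ζ x l i - netF d N w' b' ζ x l i) ^ 2) ≤ netLip r X l * Δ ^ 2) := by
    intro l
    induction l with
    | zero =>
      intro hl
      -- layer 0
      have key : ∀ (c : ℕ → ℕ → ℝ) (v : ℕ → ℕ → ℕ → ℝ) (R : ℝ),
          (∑ i ∈ Finset.range (N 0), (c 0 i) ^ 2) ≤ R →
          (∑ i ∈ Finset.range (N 0),
              ∑ j ∈ Finset.range d, (v 0 i j) ^ 2) ≤ R →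
          (∑ i ∈ Finset.range (N 0),
            (c 0 i + ∑ j : Fin d, v 0 i j.val * x j) ^ 2) ≤ 2 * R * (1 + X) := by
        intro c v R hc hv
        have hR : 0 ≤ R := le_trans (Finset.sum_nonneg fun _ _ => sq_nonneg _) hc
        have step : ∀ i ∈ Finset.range (N 0),
            (c 0 i + ∑ j : Fin d, v 0 i j.val * x j) ^ 2 ≤
              2 * (c 0 i) ^ 2 + 2 * ((∑ j ∈ Finset.range d, (v 0 i j) ^ 2) * X) := by
          intro i _
          have h1 := sq_add_le_two (c 0 i) (∑ j : Fin d, v 0 i j.val * x j)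
          have h2 : (∑ j : Fin d, v 0 i j.val * x j) ^ 2 ≤
              (∑ j : Fin d, (v 0 i j.val) ^ 2) * ∑ j : Fin d, (x j) ^ 2 :=
            Finset.sum_mul_sq_le_sq_mul_sq _ _ _
          have h3 : (∑ j : Fin d, (v 0 i j.val) ^ 2) = ∑ j ∈ Finset.range d, (v 0 i j) ^ 2 :=
            Fin.sum_univ_eq_sum_range (fun j => (v 0 i j) ^ 2) d
          rw [h3] at h2
          rw [← hXdef] at h2
          linarith
        calc (∑ i ∈ Finset.range (N 0),
              (c 0 i + ∑ j : Fin d, v 0 i j.val * x j) ^ 2)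
            ≤ ∑ i ∈ Finset.range (N 0),
              (2 * (c 0 i) ^ 2 + 2 * ((∑ j ∈ Finset.range d, (v 0 i j) ^ 2) * X)) :=
              Finset.sum_le_sum step
          _ = 2 * (∑ i ∈ Finset.range (N 0), (c 0 i) ^ 2) +
              2 * ((∑ i ∈ Finset.range (N 0), ∑ j ∈ Finset.range d, (v 0 i j) ^ 2) * X) := by
              rw [Finset.sum_add_distrib, ← Finset.mul_sum, ← Finset.mul_sum, ← Finset.sum_mul]
          _ ≤ 2 * R + 2 * (R * X) := by
              have := mul_le_mul_of_nonneg_right hv hX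
              linarith
          _ = 2 * R * (1 + X) := by ring
      have h0 : (0:ℕ) ≤ n := Nat.zero_le n
      have e1 := (hb 0 h0).1
      have e2 := (hb 0 h0).2
      have e1' := (hb' 0 h0).1
      have e2' := (hb' 0 h0).2
      have e1d := (hbd 0 h0).1
      have e2d := (hbd 0 h0).2
      simp only [if_pos rfl] at e2 e2' e2d
      refine ⟨?_, ?_, ?_⟩
      · have := key b w _ e1 e2
        simpa [netF, netBnd] using this
      · have := key b' w' _ e1' e2'
        simpa [netF, netBnd] using this
      · have := key (fun l i => b l i - b' l i) (fun l i j => w l i j - w' l i j) _ e1d e2d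
        have heq : ∀ i, netF d N w b ζ x 0 i - netF d N w' b' ζ x 0 i =
            (b 0 i - b' 0 i) + ∑ j : Fin d, (w 0 i j.val - w' 0 i j.val) * x j := by
          intro i
          simp only [netF]
          have hss : ∑ j : Fin d, (w 0 i j.val - w' 0 i j.val) * x j =
              (∑ j : Fin d, w 0 i j.val * x j) - ∑ j : Fin d, w' 0 i j.val * x j := by
            rw [← Finset.sum_sub_distrib]
            exact Finset.sum_congr rfl fun j _ => by ring
          rw [hss]; ring
        calc (∑ i ∈ Finset.range (N 0),
              (netF d N w b ζ x 0 i - netF d N w' b' ζ x 0 i) ^ 2)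
            = ∑ i ∈ Finset.range (N 0),
              ((b 0 i - b' 0 i) + ∑ j : Fin d, (w 0 i j.val - w' 0 i j.val) * x j) ^ 2 := by
              apply Finset.sum_congr rfl; intro i _; rw [heq i]
          _ ≤ 2 * Δ ^ 2 * (1 + X) := this
          _ = netLip r X 0 * Δ ^ 2 := by simp [netLip]; ring
    | succ l ih =>
      intro hl
      have hl' : l ≤ n := Nat.le_of_succ_le hl
      obtain ⟨ih1, ih2, ih3⟩ := ih hl'
      have hBl := netBnd_nonneg r X hX l
      have hCl := netLip_nonneg r X hX l
      -- bounds on ζ of previous layer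
      have hz1 : (∑ j ∈ Finset.range (N l), (ζ (netF d N w b ζ x l j)) ^ 2) ≤ netBnd r X l :=
        le_trans (Finset.sum_le_sum fun j _ => hζsq0 _) ih1
      have hz2 : (∑ j ∈ Finset.range (N l), (ζ (netF d N w' b' ζ x l j)) ^ 2) ≤ netBnd r X l :=
        le_trans (Finset.sum_le_sum fun j _ => hζsq0 _) ih2
      have hz3 : (∑ j ∈ Finset.range (N l),
          (ζ (netF d N w b ζ x l j) - ζ (netF d N w' b' ζ x l j)) ^ 2) ≤ netLip r X l * Δ ^ 2 :=
        le_trans (Finset.sum_le_sum fun j _ => hζsq _ _) ih3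
      have hif : (if l + 1 = 0 then d else N (l + 1 - 1)) = N l := by simp
      have e1 := (hb (l+1) hl).1
      have e2 := (hb (l+1) hl).2
      have e1' := (hb' (l+1) hl).1
      have e2' := (hb' (l+1) hl).2
      have e1d := (hbd (l+1) hl).1
      have e2d := (hbd (l+1) hl).2
      rw [hif] at e2 e2' e2d
      -- norm bound helper for layer l+1
      have key : ∀ (c : ℕ → ℕ → ℝ) (v : ℕ → ℕ → ℕ → ℝ) (F : ℕ → ℝ) (Bz : ℝ),
          0 ≤ Bz →
          (∑ i ∈ Finset.range (N (l+1)), (c (l+1) i) ^ 2) ≤ r ^ 2 →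
          (∑ i ∈ Finset.range (N (l+1)), ∑ j ∈ Finset.range (N l), (v (l+1) i j) ^ 2) ≤ r ^ 2 →
          (∑ j ∈ Finset.range (N l), (F j) ^ 2) ≤ Bz →
          (∑ i ∈ Finset.range (N (l+1)),
            (c (l+1) i + ∑ j ∈ Finset.range (N l), v (l+1) i j * F j) ^ 2) ≤
            2 * r ^ 2 * (1 + Bz) := by
        intro c v F Bz hBz hc hv hF
        have step : ∀ i ∈ Finset.range (N (l+1)),
            (c (l+1) i + ∑ j ∈ Finset.range (N l), v (l+1) i j * F j) ^ 2 ≤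
              2 * (c (l+1) i) ^ 2 +
              2 * ((∑ j ∈ Finset.range (N l), (v (l+1) i j) ^ 2) * Bz) := by
          intro i _
          have h1 := sq_add_le_two (c (l+1) i) (∑ j ∈ Finset.range (N l), v (l+1) i j * F j)
          have h2 : (∑ j ∈ Finset.range (N l), v (l+1) i j * F j) ^ 2 ≤
              (∑ j ∈ Finset.range (N l), (v (l+1) i j) ^ 2) *
                ∑ j ∈ Finset.range (N l), (F j) ^ 2 :=
            Finset.sum_mul_sq_le_sq_mul_sq _ _ _
          have h4 : 0 ≤ ∑ j ∈ Finset.range (N l), (v (l+1) i j) ^ 2 :=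
            Finset.sum_nonneg fun _ _ => sq_nonneg _
          have h3 := mul_le_mul_of_nonneg_left hF h4
          linarith
        calc (∑ i ∈ Finset.range (N (l+1)),
              (c (l+1) i + ∑ j ∈ Finset.range (N l), v (l+1) i j * F j) ^ 2)
            ≤ ∑ i ∈ Finset.range (N (l+1)),
              (2 * (c (l+1) i) ^ 2 +
               2 * ((∑ j ∈ Finset.range (N l), (v (l+1) i j) ^ 2) * Bz)) :=
              Finset.sum_le_sum step
          _ = 2 * (∑ i ∈ Finset.range (N (l+1)), (c (l+1) i) ^ 2) +
              2 * ((∑ i ∈ Finset.range (N (l+1)),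
                ∑ j ∈ Finset.range (N l), (v (l+1) i j) ^ 2) * Bz) := by
              rw [Finset.sum_add_distrib, ← Finset.mul_sum, ← Finset.mul_sum, ← Finset.sum_mul]
          _ ≤ 2 * r ^ 2 + 2 * (r ^ 2 * Bz) := by
              have := mul_le_mul_of_nonneg_right hv hBz
              linarith
          _ = 2 * r ^ 2 * (1 + Bz) := by ring
      refine ⟨?_, ?_, ?_⟩
      · have := key b w (fun j => ζ (netF d N w b ζ x l j)) (netBnd r X l) hBl e1 e2 hz1
        simpa [netF, netBnd] using this
      · have := key b' w' (fun j => ζ (netF d N w' b' ζ x l j)) (netBnd r X l) hBl e1' e2' hz2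
        simpa [netF, netBnd] using this
      · -- Lipschitz step
        have heq : ∀ i, netF d N w b ζ x (l+1) i - netF d N w' b' ζ x (l+1) i =
            (b (l+1) i - b' (l+1) i) +
            (∑ j ∈ Finset.range (N l),
              (w (l+1) i j - w' (l+1) i j) * ζ (netF d N w b ζ x l j)) +
            (∑ j ∈ Finset.range (N l),
              w' (l+1) i j * (ζ (netF d N w b ζ x l j) - ζ (netF d N w' b' ζ x l j))) := by
          intro i
          simp only [netF]
          have h1 : (∑ j ∈ Finset.range (N l),
              (w (l+1) i j - w' (l+1) i j) * ζ (netF d N w b ζ x l j)) +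
              (∑ j ∈ Finset.range (N l),
                w' (l+1) i j * (ζ (netF d N w b ζ x l j) - ζ (netF d N w' b' ζ x l j))) =
              ∑ j ∈ Finset.range (N l),
                (w (l+1) i j * ζ (netF d N w b ζ x l j) -
                  w' (l+1) i j * ζ (netF d N w' b' ζ x l j)) := by
            rw [← Finset.sum_add_distrib]
            exact Finset.sum_congr rfl fun j _ => by ring
          have h2 : (∑ j ∈ Finset.range (N l),
              (w (l+1) i j * ζ (netF d N w b ζ x l j) -
                w' (l+1) i j * ζ (netF d N w' b' ζ x l j))) =
              (∑ j ∈ Finset.range (N l), w (l+1) i j * ζ (netF d N w b ζ x l j)) -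
              ∑ j ∈ Finset.range (N l), w' (l+1) i j * ζ (netF d N w' b' ζ x l j) :=
            Finset.sum_sub_distrib _ _
          linarith
        have step : ∀ i ∈ Finset.range (N (l+1)),
            (netF d N w b ζ x (l+1) i - netF d N w' b' ζ x (l+1) i) ^ 2 ≤
            3 * ((b (l+1) i - b' (l+1) i) ^ 2 +
              (∑ j ∈ Finset.range (N l), (w (l+1) i j - w' (l+1) i j) ^ 2) * netBnd r X l +
              (∑ j ∈ Finset.range (N l), (w' (l+1) i j) ^ 2) * (netLip r X l * Δ ^ 2)) := by
          intro i _
          rw [heq i]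
          have h1 := sq_add_le_three (b (l+1) i - b' (l+1) i)
            (∑ j ∈ Finset.range (N l),
              (w (l+1) i j - w' (l+1) i j) * ζ (netF d N w b ζ x l j))
            (∑ j ∈ Finset.range (N l),
              w' (l+1) i j * (ζ (netF d N w b ζ x l j) - ζ (netF d N w' b' ζ x l j)))
          have h2 : (∑ j ∈ Finset.range (N l),
              (w (l+1) i j - w' (l+1) i j) * ζ (netF d N w b ζ x l j)) ^ 2 ≤
              (∑ j ∈ Finset.range (N l), (w (l+1) i j - w' (l+1) i j) ^ 2) *
                ∑ j ∈ Finset.range (N l), (ζ (netF d N w b ζ x l j)) ^ 2 :=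
            Finset.sum_mul_sq_le_sq_mul_sq _ _ _
          have h3 : (∑ j ∈ Finset.range (N l),
              w' (l+1) i j * (ζ (netF d N w b ζ x l j) - ζ (netF d N w' b' ζ x l j))) ^ 2 ≤
              (∑ j ∈ Finset.range (N l), (w' (l+1) i j) ^ 2) *
                ∑ j ∈ Finset.range (N l),
                  (ζ (netF d N w b ζ x l j) - ζ (netF d N w' b' ζ x l j)) ^ 2 :=
            Finset.sum_mul_sq_le_sq_mul_sq _ _ _
          have h4 : 0 ≤ ∑ j ∈ Finset.range (N l), (w (l+1) i j - w' (l+1) i j) ^ 2 :=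
            Finset.sum_nonneg fun _ _ => sq_nonneg _
          have h5 : 0 ≤ ∑ j ∈ Finset.range (N l), (w' (l+1) i j) ^ 2 :=
            Finset.sum_nonneg fun _ _ => sq_nonneg _
          have h6 := mul_le_mul_of_nonneg_left hz1 h4
          have h7 := mul_le_mul_of_nonneg_left hz3 h5
          linarith
        have hΔ2 : (0:ℝ) ≤ Δ ^ 2 := sq_nonneg Δ
        calc (∑ i ∈ Finset.range (N (l+1)),
              (netF d N w b ζ x (l+1) i - netF d N w' b' ζ x (l+1) i) ^ 2)
            ≤ ∑ i ∈ Finset.range (N (l+1)),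
              (3 * ((b (l+1) i - b' (l+1) i) ^ 2 +
                (∑ j ∈ Finset.range (N l), (w (l+1) i j - w' (l+1) i j) ^ 2) * netBnd r X l +
                (∑ j ∈ Finset.range (N l), (w' (l+1) i j) ^ 2) * (netLip r X l * Δ ^ 2))) :=
              Finset.sum_le_sum step
          _ = 3 * ((∑ i ∈ Finset.range (N (l+1)), (b (l+1) i - b' (l+1) i) ^ 2) +
                (∑ i ∈ Finset.range (N (l+1)),
                  ∑ j ∈ Finset.range (N l), (w (l+1) i j - w' (l+1) i j) ^ 2) * netBnd r X l +
                (∑ i ∈ Finset.range (N (l+1)),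
                  ∑ j ∈ Finset.range (N l), (w' (l+1) i j) ^ 2) * (netLip r X l * Δ ^ 2)) := by
              rw [← Finset.mul_sum]
              congr 1
              rw [Finset.sum_add_distrib, Finset.sum_add_distrib,
                ← Finset.sum_mul, ← Finset.sum_mul]
          _ ≤ 3 * (Δ ^ 2 + Δ ^ 2 * netBnd r X l + r ^ 2 * (netLip r X l * Δ ^ 2)) := by
              have t1 := mul_le_mul_of_nonneg_right e2d hBl
              have t2 := mul_le_mul_of_nonneg_right e2'
                (mul_nonneg hCl hΔ2)
              linarith
          _ = netLip r X (l + 1) * Δ ^ 2 := by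
              simp only [netLip]; ring
  -- conclude
  obtain ⟨-, -, hfin⟩ := main n le_rfl
  rw [hNn] at hfin
  rw [Finset.sum_range_one] at hfin
  have hK : 0 ≤ netLip r X n * Δ ^ 2 := mul_nonneg (netLip_nonneg r X hX n) (sq_nonneg Δ)
  linarith
end
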